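/- Let E, H₁, H₂ be complex Hilbert spaces and let A ∈ B(E), B₁ ∈ B(H₁, E), B₂ ∈ B(H₂, E), C₁ ∈ B(E, H₁), C₂ ∈ B(E, H₂), D₁ ∈ B(H₁), D₂ ∈ B(H₂, H₁), D₃ ∈ B(H₂), A₁, A₂ ∈ B(E), X₁ ∈ B(E, H₁), Y₂ ∈ B(H₂, E). Suppose the operator U on E ⊕ H₁ ⊕ H₂ defined by U(e, h₁, h₂) = (A e + B₁ h₁ + B₂ h₂, C₁ e + D₁ h₁ + D₂ h₂, C₂ e + D₃ h₂) is an isometry, and that A = A₁ A₂, B₂ = A₁ Y₂, C₁ = X₁ A₂, D₂ = X₁ Y₂, A₁*A₁ + X₁*X₁ = I_E, and A₂* is injective on the range of A₁*B₁ + X₁*D₁. Then the operator U₁ on E ⊕ H₁ defined by U₁(e, h₁) = (A₁ e + B₁ h₁, X₁ e + D₁ h₁) is an isometry. -/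

import Mathlib

open ContinuousLinearMap

/-- The element `(x, y)` of the Hilbert-space direct sum `X ⊕ Y`,
modelled as `WithLp 2 (X × Y)`. -/
noncomputable def mk2 {X Y : Type*} (x : X) (y : Y) : WithLp 2 (X × Y) :=
  (WithLp.equiv 2 (X × Y)).symm (x, y)

/-- The element `(e, h₁, h₂)` of the Hilbert-space direct sum `E ⊕ H₁ ⊕ H₂`,
modelled as `WithLp 2 (E × WithLp 2 (H₁ × H₂))`. -/
noncomputable def mk3 {E H₁ H₂ : Type*} (e : E) (h₁ : H₁) (h₂ : H₂) :
    WithLp 2 (E × WithLp 2 (H₁ × H₂)) :=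
  (WithLp.equiv 2 _).symm (e, (WithLp.equiv 2 (H₁ × H₂)).symm (h₁, h₂))

/-- Suppose
`U(e, h₁, h₂) = (A e + B₁ h₁ + B₂ h₂, C₁ e + D₁ h₁ + D₂ h₂, C₂ e + D₃ h₂)` is an
isometry, `A = A₁ A₂`, `B₂ = A₁ Y₂`, `C₁ = X₁ A₂`, `D₂ = X₁ Y₂`,
`A₁*A₁ + X₁*X₁ = I` and `A₂*` is injective on the range of `A₁*B₁ + X₁*D₁`.
Then `U₁(e, h₁) = (A₁ e + B₁ h₁, X₁ e + D₁ h₁)` is an isometry on `E ⊕ H₁`. -/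
theorem statement10
    {E H₁ H₂ : Type*}
    [NormedAddCommGroup E] [InnerProductSpace ℂ E] [CompleteSpace E]
    [NormedAddCommGroup H₁] [InnerProductSpace ℂ H₁] [CompleteSpace H₁]
    [NormedAddCommGroup H₂] [InnerProductSpace ℂ H₂] [CompleteSpace H₂]
    (A : E →L[ℂ] E) (B₁ : H₁ →L[ℂ] E) (B₂ : H₂ →L[ℂ] E)
    (C₁ : E →L[ℂ] H₁) (C₂ : E →L[ℂ] H₂)
    (D₁ : H₁ →L[ℂ] H₁) (D₂ : H₂ →L[ℂ] H₁) (D₃ : H₂ →L[ℂ] H₂)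
    (A₁ A₂ : E →L[ℂ] E) (X₁ : E →L[ℂ] H₁) (Y₂ : H₂ →L[ℂ] E)
    (U : WithLp 2 (E × WithLp 2 (H₁ × H₂)) →L[ℂ] WithLp 2 (E × WithLp 2 (H₁ × H₂)))
    (hU : ∀ (e : E) (h₁ : H₁) (h₂ : H₂),
      U (mk3 e h₁ h₂) =
        mk3 (A e + B₁ h₁ + B₂ h₂) (C₁ e + D₁ h₁ + D₂ h₂) (C₂ e + D₃ h₂))
    (hIso : Isometry U)
    (hA : A = A₁ ∘L A₂) (hB₂ : B₂ = A₁ ∘L Y₂)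
    (hC₁ : C₁ = X₁ ∘L A₂) (hD₂ : D₂ = X₁ ∘L Y₂)
    (hA₁X₁ : adjoint A₁ ∘L A₁ + adjoint X₁ ∘L X₁ = ContinuousLinearMap.id ℂ E)
    (hInj : ∀ h : H₁, adjoint A₂ ((adjoint A₁ ∘L B₁ + adjoint X₁ ∘L D₁) h) = 0 →
      (adjoint A₁ ∘L B₁ + adjoint X₁ ∘L D₁) h = 0)
    (U₁ : WithLp 2 (E × H₁) →L[ℂ] WithLp 2 (E × H₁))
    (hU₁ : ∀ (e : E) (h₁ : H₁), U₁ (mk2 e h₁) = mk2 (A₁ e + B₁ h₁) (X₁ e + D₁ h₁)) :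
    Isometry U₁ := by
  classical
  have hnorm : ∀ x, ‖U x‖ = ‖x‖ := (AddMonoidHomClass.isometry_iff_norm U).mp hIso
  let L : WithLp 2 (E × WithLp 2 (H₁ × H₂)) →ₗᵢ[ℂ] WithLp 2 (E × WithLp 2 (H₁ × H₂)) :=
    ⟨U.toLinearMap, hnorm⟩
  have hinner : ∀ x y, (inner ℂ (U x) (U y) : ℂ) = inner ℂ x y := fun x y => L.inner_map_map x y
  set S : H₁ →L[ℂ] E := adjoint A₁ ∘L B₁ + adjoint X₁ ∘L D₁ with hSdef
  -- orthogonality of columns of U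
  have key : ∀ (e : E) (h : H₁),
      (inner ℂ (A e) (B₁ h) : ℂ) + inner ℂ (C₁ e) (D₁ h) = 0 := by
    intro e h
    have h1 := hinner (mk3 e 0 0) (mk3 0 h 0)
    rw [hU e 0 0, hU 0 h 0] at h1
    simpa [mk3, WithLp.prod_inner_apply, WithLp.equiv_symm_apply, WithLp.ofLp_toLp] using h1
  have key2 : ∀ (e : E) (h : H₁), (inner ℂ (A₂ e) (S h) : ℂ) = 0 := by
    intro e h
    have := key e h
    rw [hA, hC₁] at this
    simpa [hSdef, inner_add_right, adjoint_inner_right] using this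
  have hS0 : ∀ h : H₁, S h = 0 := by
    intro h
    apply hInj
    rw [← inner_self_eq_zero (𝕜 := ℂ)]
    rw [adjoint_inner_right]
    exact key2 _ h
  -- norm of second column
  have col : ∀ h : H₁,
      (inner ℂ (B₁ h) (B₁ h) : ℂ) + inner ℂ (D₁ h) (D₁ h) = inner ℂ h h := by
    intro h
    have h1 := hinner (mk3 0 h 0) (mk3 0 h 0)
    rw [hU 0 h 0] at h1
    simpa [mk3, WithLp.prod_inner_apply, WithLp.equiv_symm_apply, WithLp.ofLp_toLp, -inner_self_eq_norm_sq_to_K] using h1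
  have f1 : ∀ e : E,
      (inner ℂ (A₁ e) (A₁ e) : ℂ) + inner ℂ (X₁ e) (X₁ e) = inner ℂ e e := by
    intro e
    have h1 : (inner ℂ e ((adjoint A₁ ∘L A₁ + adjoint X₁ ∘L X₁) e) : ℂ) = inner ℂ e e := by
      rw [hA₁X₁]; rfl
    simpa [inner_add_right, adjoint_inner_right] using h1
  have f3 : ∀ (e : E) (h : H₁), (inner ℂ (A₁ e) (B₁ h) : ℂ) + inner ℂ (X₁ e) (D₁ h) = 0 := by
    intro e h
    have : (inner ℂ e (S h) : ℂ) = 0 := by rw [hS0 h, inner_zero_right]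
    simpa [hSdef, inner_add_right, adjoint_inner_right] using this
  have f4 : ∀ (e : E) (h : H₁), (inner ℂ (B₁ h) (A₁ e) : ℂ) + inner ℂ (D₁ h) (X₁ e) = 0 := by
    intro e h
    have : (inner ℂ (S h) e : ℂ) = 0 := by rw [hS0 h, inner_zero_left]
    simpa [hSdef, inner_add_left, adjoint_inner_left] using this
  apply AddMonoidHomClass.isometry_of_norm
  intro x
  have hx : x = mk2 x.fst x.snd := rfl
  rw [@norm_eq_sqrt_re_inner ℂ, @norm_eq_sqrt_re_inner ℂ]
  congr 2
  rw [hx, hU₁]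
  simp only [mk2, WithLp.prod_inner_apply, WithLp.equiv_symm_apply, WithLp.ofLp_toLp,
    inner_add_left, inner_add_right]
  have e1 := f1 x.fst
  have e2 := col x.snd
  have e3 := f3 x.fst x.snd
  have e4 := f4 x.fst x.snd
  linear_combination e1 + e2 + e3 + e4
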